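/- For every integer n ≥ 0, the number of single Dyck paths of length 2n and height h ≥ 1 satisfies P_n(h) = Σ_{y=1}^{h} P_n(y, h−1); that is, the count of Dyck paths of length 2n with height exactly h equals the number of ordered pairs of Dyck paths of total length 2n whose heights are y and h−1 for some 1 ≤ y ≤ h. -/

import Mathlib

/-- A Dyck path: a finite sequence of ±1 steps with all partial sums nonnegative
and total sum zero. -/
def IsDyckPath (p : List ℤ) : Prop :=
  (∀ s ∈ p, s = 1 ∨ s = -1) ∧ (∀ k, 0 ≤ (p.take k).sum) ∧ p.sum = 0

/-- The height of a path: the maximum of its partial sums (0 for the empty path). -/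
def pathHeight (p : List ℤ) : ℕ :=
  Finset.sup (Finset.range (p.length + 1)) (fun k => ((p.take k).sum).toNat)

/-- Super-Catalan numbers `T(m,n) = (2m)!(2n)!/(2·m!·n!·(m+n)!)`, as a rational number. -/
def superCatalan (m n : ℕ) : ℚ :=
  ((2 * m).factorial * (2 * n).factorial : ℚ) /
    (2 * m.factorial * n.factorial * (m + n).factorial)

/-- `G n m k`: the number of `m`-tuples of Dyck paths of total length `2n` all of whose
pairwise height differences are at most `k` (this is `0` when `n < 0`). -/
noncomputable def G (n : ℤ) (m k : ℕ) : ℕ :=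
  Nat.card {p : Fin m → List ℤ //
    (∀ i, IsDyckPath (p i)) ∧
    (∑ i, ((p i).length : ℤ)) = 2 * n ∧
    ∀ i j, |(pathHeight (p i) : ℤ) - (pathHeight (p j) : ℤ)| ≤ (k : ℤ)}

/-- The path-height function `P n [a₁,…,aₘ]`: the number of `m`-tuples of Dyck paths
of total length `2n` whose `i`-th path has height `aᵢ`. -/
noncomputable def P (n : ℤ) (a : List ℕ) : ℕ :=
  Nat.card {p : Fin a.length → List ℤ //
    (∀ i, IsDyckPath (p i)) ∧
    (∑ i, ((p i).length : ℤ)) = 2 * n ∧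
    ∀ i, pathHeight (p i) = a.get i}

/-- `Qx n x [a₀,…,a_k]` is `P n` evaluated at `a₀` copies of `x`, `a₁` copies of `x+1`, …,
`a_k` copies of `x+k`. -/
noncomputable def Qx (n : ℤ) (x : ℕ) (a : List ℕ) : ℕ :=
  P n (a.zipIdx.flatMap fun q => List.replicate q.1 (x + q.2))

/-- The grouped path-height function `Q n a = ∑_{x=0}^∞ Qx n x a`. Whenever some entry
of `a` is positive (as in every application below) all terms with `x > n` vanish, since
a Dyck path of height at least `x` has length at least `2x`; so the infinite sum equals
its truncation at `x = n`. -/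
noncomputable def Q (n : ℤ) (a : List ℕ) : ℕ :=
  ∑ x ∈ Finset.range (n.toNat + 1), Qx n x a

namespace SPS

def psum (p : List ℤ) (k : ℕ) : ℤ := (p.take k).sum

@[simp] lemma psum_zero (p : List ℤ) : psum p 0 = 0 := by simp [psum]

lemma psum_of_le {p : List ℤ} {k : ℕ} (h : p.length ≤ k) : psum p k = p.sum := by
  simp [psum, List.take_of_length_le h]

lemma psum_append (p q : List ℤ) (k : ℕ) :
    psum (p ++ q) k = psum p k + psum q (k - p.length) := by
  simp [psum, List.take_append]

lemma psum_cons_succ (x : ℤ) (p : List ℤ) (k : ℕ) :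
    psum (x :: p) (k + 1) = x + psum p k := by
  simp [psum, List.take_succ_cons]

lemma psum_take (p : List ℤ) (c k : ℕ) : psum (p.take c) k = psum p (min k c) := by
  simp [psum, List.take_take]

lemma psum_min (p : List ℤ) (k : ℕ) : psum p k = psum p (min k p.length) := by
  rcases le_total k p.length with h | h
  · rw [min_eq_left h]
  · rw [min_eq_right h, psum_of_le h, psum_of_le le_rfl]

lemma psum_drop (p : List ℤ) (m k : ℕ) :
    psum (p.drop m) k = psum p (m + k) - psum p m := by
  rcases le_total m p.length with h | h
  · have h1 : psum p (m + k) = psum (p.take m ++ p.drop m) (m + k) := by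
      rw [List.take_append_drop]
    rw [psum_append] at h1
    rw [List.length_take, min_eq_left h] at h1
    rw [psum_take, min_eq_right (Nat.le_add_right m k)] at h1
    have h2 : m + k - m = k := by omega
    rw [h2] at h1
    have h3 : psum p m = psum (p.take m) m := by
      rw [psum_take, min_self]
    omega
  · rw [List.drop_eq_nil_of_le h]
    rw [psum_of_le (show (List.nil (α := ℤ)).length ≤ k by simp),
      psum_of_le (le_trans h (Nat.le_add_right m k)), psum_of_le h]
    simp

lemma psum_step (p : List ℤ) (k : ℕ) (h : k < p.length) :
    psum p (k + 1) = psum p k + p[k] := by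
  exact List.sum_take_succ p k h

lemma height_le_iff {p : List ℤ} {m : ℕ} :
    pathHeight p ≤ m ↔ ∀ k, psum p k ≤ (m : ℤ) := by
  rw [pathHeight, Finset.sup_le_iff]
  constructor
  · intro H k
    have hk : min k p.length ∈ Finset.range (p.length + 1) := by
      simp [Nat.lt_succ_iff]
    have := H _ hk
    rw [psum_min]
    exact le_trans (Int.self_le_toNat _) (by exact_mod_cast this)
  · intro H k _
    exact Int.toNat_le.2 (H k)

lemma toNat_le_height (p : List ℤ) (k : ℕ) : (psum p k).toNat ≤ pathHeight p := by
  rw [psum_min]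
  refine Finset.le_sup (f := fun k => ((p.take k).sum).toNat) ?_
  simp [Nat.lt_succ_iff]

lemma le_height {p : List ℤ} (k : ℕ) : psum p k ≤ (pathHeight p : ℤ) :=
  le_trans (Int.self_le_toNat _) (by exact_mod_cast toNat_le_height p k)

lemma exists_height (p : List ℤ) : ∃ k ≤ p.length, (psum p k).toNat = pathHeight p := by
  obtain ⟨k, hk, hk2⟩ := Finset.exists_mem_eq_sup (Finset.range (p.length + 1))
    ⟨0, by simp⟩ (fun k => ((p.take k).sum).toNat)
  exact ⟨k, by simpa [Nat.lt_succ_iff] using hk, hk2.symm⟩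

@[simp] lemma height_nil : pathHeight ([] : List ℤ) = 0 := by
  simp [pathHeight]


lemma dyck_psum_nonneg {p : List ℤ} (h : IsDyckPath p) (k : ℕ) : 0 ≤ psum p k := h.2.1 k

lemma dyck_psum_len {p : List ℤ} (h : IsDyckPath p) {k : ℕ} (hk : p.length ≤ k) :
    psum p k = 0 := by rw [psum_of_le hk, h.2.2]

lemma dyck_height_le {p : List ℤ} (h : IsDyckPath p) {m : ℕ}
    (H : ∀ k, psum p k ≤ (m : ℤ)) : pathHeight p ≤ m := height_le_iff.2 H

lemma dyck_le_height {p : List ℤ} (hp : IsDyckPath p) {k : ℕ} {m : ℕ}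
    (H : psum p k = (m : ℤ)) : m ≤ pathHeight p := by
  have := toNat_le_height p k
  rw [H] at this
  simpa using this

lemma dyck_exists_height {p : List ℤ} (hp : IsDyckPath p) :
    ∃ k ≤ p.length, psum p k = (pathHeight p : ℤ) := by
  obtain ⟨k, hk, hk2⟩ := exists_height p
  exact ⟨k, hk, by rw [← hk2]; exact (Int.toNat_of_nonneg (hp.2.1 k)).symm⟩

lemma dyck_append {p q : List ℤ} (hp : IsDyckPath p) (hq : IsDyckPath q) :
    IsDyckPath (p ++ q) := by
  refine ⟨?_, ?_, ?_⟩
  · intro s hs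
    rcases List.mem_append.1 hs with h | h
    · exact hp.1 s h
    · exact hq.1 s h
  · intro k
    have := psum_append p q k
    have h1 : 0 ≤ psum p k := hp.2.1 k
    have h2 : 0 ≤ psum q (k - p.length) := hq.2.1 (k - p.length)
    show (0:ℤ) ≤ psum (p ++ q) k
    omega
  · rw [List.sum_append, hp.2.2, hq.2.2, add_zero]

lemma height_append {p q : List ℤ} (hp : IsDyckPath p) (hq0 : ∀ k, 0 ≤ psum q k) :
    pathHeight (p ++ q) = max (pathHeight p) (pathHeight q) := by
  apply le_antisymm
  · rw [height_le_iff]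
    intro k
    rw [psum_append]
    rcases le_total k p.length with h | h
    · have : k - p.length = 0 := by omega
      rw [this, psum_zero, add_zero]
      exact le_trans (le_height k) (by exact_mod_cast le_max_left _ _)
    · rw [dyck_psum_len hp h, zero_add]
      exact le_trans (le_height _) (by exact_mod_cast le_max_right _ _)
  · rw [max_le_iff]
    constructor
    · obtain ⟨k, hk, hk2⟩ := dyck_exists_height hp
      have : psum (p ++ q) k = (pathHeight p : ℤ) := by
        rw [psum_append, hk2]
        have : k - p.length = 0 := by omega
        rw [this, psum_zero, add_zero]
      have h2 := toNat_le_height (p ++ q) k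
      rw [this] at h2
      simpa using h2
    · obtain ⟨k, hk, hk2⟩ := exists_height q
      have hq : psum q k = (pathHeight q : ℤ) := by
        rw [← hk2, Int.toNat_of_nonneg (hq0 k)]
      have : psum (p ++ q) (p.length + k) = (pathHeight q : ℤ) := by
        rw [psum_append, dyck_psum_len hp (Nat.le_add_right _ _)]
        have : p.length + k - p.length = k := by omega
        rw [this, zero_add, hq]
      have h2 := toNat_le_height (p ++ q) (p.length + k)
      rw [this] at h2
      simpa using h2

def arch (C : List ℤ) : List ℤ := (1 : ℤ) :: (C ++ [(-1 : ℤ)])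

@[simp] lemma psum_single_neg (m : ℕ) : psum [(-1 : ℤ)] m = if m = 0 then 0 else -1 := by
  cases m with
  | zero => simp
  | succ k => simp [psum, List.take_succ_cons]

lemma psum_arch_succ (C : List ℤ) (k : ℕ) :
    psum (arch C) (k + 1) = 1 + psum C k + psum [(-1:ℤ)] (k - C.length) := by
  rw [arch, psum_cons_succ, psum_append]; ring

lemma dyck_arch {C : List ℤ} (hC : IsDyckPath C) : IsDyckPath (arch C) := by
  refine ⟨?_, ?_, ?_⟩
  · intro s hs
    rcases hs with _ | hs
    · exact Or.inl rfl
    · rcases List.mem_append.1 (by assumption) with h | h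
      · exact hC.1 s h
      · simp at h; right; exact h
  · intro k
    cases k with
    | zero => simp
    | succ k =>
      show (0:ℤ) ≤ psum (arch C) (k+1)
      rw [psum_arch_succ]
      have h1 : 0 ≤ psum C k := hC.2.1 k
      have h2 := psum_single_neg (k - C.length)
      split at h2 <;> omega
  · show (1 : ℤ) + (C ++ [(-1:ℤ)]).sum = 0
    rw [List.sum_append, hC.2.2]
    simp

lemma height_arch {C : List ℤ} (hC : IsDyckPath C) :
    pathHeight (arch C) = pathHeight C + 1 := by
  apply le_antisymm
  · rw [height_le_iff]
    intro k
    cases k with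
    | zero => simp; positivity
    | succ k =>
      rw [psum_arch_succ]
      have h1 : psum C k ≤ (pathHeight C : ℤ) := le_height k
      have h2 := psum_single_neg (k - C.length)
      push_cast
      split at h2 <;> omega
  · obtain ⟨k, hk, hk2⟩ := dyck_exists_height hC
    have : psum (arch C) (k + 1) = (pathHeight C : ℤ) + 1 := by
      rw [psum_arch_succ, hk2]
      have : k - C.length = 0 := by omega
      rw [this]
      simp
      ring
    have h2 := toNat_le_height (arch C) (k+1)
    rw [this] at h2
    have : ((pathHeight C : ℤ) + 1).toNat = pathHeight C + 1 := by
      omega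
    omega

def asm (P C S : List ℤ) : List ℤ := P ++ arch C ++ S

lemma dyck_asm {P C S : List ℤ} (hP : IsDyckPath P) (hC : IsDyckPath C)
    (hS : IsDyckPath S) : IsDyckPath (asm P C S) :=
  dyck_append (dyck_append hP (dyck_arch hC)) hS

lemma len_asm (P C S : List ℤ) :
    (asm P C S).length = P.length + C.length + S.length + 2 := by
  simp [asm, arch]
  omega

lemma height_asm {P C S : List ℤ} (hP : IsDyckPath P) (hC : IsDyckPath C)
    (hS : IsDyckPath S) :
    pathHeight (asm P C S) = max (pathHeight P) (max (pathHeight C + 1) (pathHeight S)) := by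
  have h1 : IsDyckPath (P ++ arch C) := dyck_append hP (dyck_arch hC)
  rw [asm, height_append h1 hS.2.1, height_append hP (dyck_arch hC).2.1, height_arch hC,
    max_assoc]


lemma sum_arch {C : List ℤ} (hC : C.sum = 0) : (arch C).sum = 0 := by
  show (1 : ℤ) + (C ++ [(-1:ℤ)]).sum = 0
  rw [List.sum_append, hC]; simp

lemma len_arch (C : List ℤ) : (arch C).length = C.length + 2 := by
  simp [arch]

lemma psum_asm_lo {P C S : List ℤ} {k : ℕ} (hk : k ≤ P.length) :
    psum (asm P C S) k = psum P k := by
  rw [asm, psum_append, psum_append]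
  have h1 : k - P.length = 0 := by omega
  have h2 : k - (P ++ arch C).length = 0 := by
    simp [len_arch]; omega
  rw [h1, h2, psum_zero, psum_zero, add_zero, add_zero]

lemma psum_asm_mid {P C S : List ℤ} (hP : P.sum = 0) {j : ℕ} (hj : j ≤ C.length) :
    psum (asm P C S) (P.length + 1 + j) = 1 + psum C j := by
  rw [asm, psum_append, psum_append]
  have h2 : P.length + 1 + j - (P ++ arch C).length = 0 := by
    simp [len_arch]; omega
  rw [h2, psum_zero, add_zero]
  rw [psum_of_le (by omega), hP]
  have h3 : P.length + 1 + j - P.length = j + 1 := by omega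
  rw [h3, psum_arch_succ]
  have h4 : j - C.length = 0 := by omega
  rw [h4]
  simp

lemma psum_asm_hi {P C S : List ℤ} (hP : P.sum = 0) (hC : C.sum = 0) (j : ℕ) :
    psum (asm P C S) (P.length + C.length + 2 + j) = psum S j := by
  rw [asm, psum_append]
  have h1 : (P ++ arch C).length = P.length + C.length + 2 := by simp [len_arch]; omega
  rw [h1]
  have h2 : P.length + C.length + 2 + j - (P.length + C.length + 2) = j := by omega
  rw [h2]
  have h3 : psum (P ++ arch C) (P.length + C.length + 2 + j) = 0 := by
    rw [psum_of_le (by rw [h1]; omega), List.sum_append, hP, sum_arch hC]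
    simp
  rw [h3, zero_add]

lemma zero_at_lo' {P C S : List ℤ} (hP : P.sum = 0) : psum (asm P C S) P.length = 0 := by
  rw [psum_asm_lo le_rfl, psum_of_le le_rfl, hP]

lemma zero_at_hi {P C S : List ℤ} (hP : P.sum = 0) (hC : C.sum = 0) :
    psum (asm P C S) (P.length + C.length + 2) = 0 := by
  have := psum_asm_hi (S := S) hP hC 0
  simpa using this

lemma mid_pos {P C S : List ℤ} (hP : P.sum = 0) (hC : IsDyckPath C) {k : ℕ}
    (h1 : P.length < k) (h2 : k < P.length + C.length + 2) :
    1 ≤ psum (asm P C S) k := by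
  have hj : k = P.length + 1 + (k - P.length - 1) := by omega
  rw [hj, psum_asm_mid hP (by omega)]
  have h3 : (0:ℤ) ≤ psum C (k - P.length - 1) := hC.2.1 _
  show (1:ℤ) ≤ 1 + psum C (k - P.length - 1)
  omega

lemma hi_le {P C S : List ℤ} (hP : P.sum = 0) (hC : C.sum = 0) {m : ℕ}
    (hS : pathHeight S ≤ m) {k : ℕ} (hk : P.length + C.length + 2 ≤ k) :
    psum (asm P C S) k ≤ (m : ℤ) := by
  have hj : k = P.length + C.length + 2 + (k - (P.length + C.length + 2)) := by omega
  rw [hj, psum_asm_hi hP hC]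
  exact le_trans (le_height _) (by exact_mod_cast hS)

lemma mid_attains {P C S : List ℤ} (hP : P.sum = 0) (hC : IsDyckPath C) :
    ∃ t, P.length < t ∧ t < P.length + C.length + 2 ∧
      psum (asm P C S) t = (pathHeight C : ℤ) + 1 := by
  obtain ⟨j, hj, hj2⟩ := dyck_exists_height hC
  refine ⟨P.length + 1 + j, by omega, by omega, ?_⟩
  rw [psum_asm_mid hP hj, hj2]
  ring

lemma components_eq {P1 C1 S1 P2 C2 S2 : List ℤ}
    (heq : asm P1 C1 S1 = asm P2 C2 S2) (hlp : P1.length = P2.length)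
    (hlc : C1.length = C2.length) : P1 = P2 ∧ C1 = C2 ∧ S1 = S2 := by
  rw [asm, asm] at heq
  have heq' : P1 ++ (arch C1 ++ S1) = P2 ++ (arch C2 ++ S2) := by
    rw [← List.append_assoc, ← List.append_assoc]; exact heq
  obtain ⟨hp, heq2⟩ := List.append_inj heq' hlp
  obtain ⟨hca, hs⟩ := List.append_inj heq2 (by rw [len_arch, len_arch, hlc])
  rw [arch, arch] at hca
  have hc : C1 ++ [(-1:ℤ)] = C2 ++ [(-1:ℤ)] := by
    injection hca
  obtain ⟨hc', -⟩ := List.append_inj hc hlc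
  exact ⟨hp, hc', hs⟩


lemma split_unique_aux {h : ℕ} (hh : 1 ≤ h) {P1 C1 S1 P2 C2 S2 : List ℤ}
    (hP1 : IsDyckPath P1) (hC1 : IsDyckPath C1)
    (hC2 : IsDyckPath C2) (htS1 : pathHeight S1 ≤ h - 1)
    (htC2 : pathHeight C2 = h - 1) (hP2sum : P2.sum = 0)
    (heq : asm P1 C1 S1 = asm P2 C2 S2)
    (hlt : P1.length < P2.length) : False := by
  have h0 : psum (asm P1 C1 S1) P2.length = 0 := by rw [heq]; exact zero_at_lo' hP2sum
  by_cases hcase : P2.length < P1.length + C1.length + 2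
  · have := mid_pos (S := S1) hP1.2.2 hC1 hlt hcase
    omega
  · obtain ⟨t, ht1, ht2, ht3⟩ := mid_attains (S := S2) hP2sum hC2
    rw [← heq, htC2] at ht3
    have h4 := hi_le (S := S1) hP1.2.2 hC1.2.2 htS1 (k := t) (by omega)
    rw [ht3] at h4
    omega

lemma split_unique_aux2 {P1 C1 S1 P2 C2 S2 : List ℤ}
    (hP1 : P1.sum = 0) (hC1 : C1.sum = 0) (hP2 : P2.sum = 0) (hC2 : IsDyckPath C2)
    (heq : asm P1 C1 S1 = asm P2 C2 S2)
    (hlt : P2.length ≤ P1.length)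
    (hlt2 : P1.length + C1.length + 2 < P2.length + C2.length + 2) : False := by
  have h0 : psum (asm P2 C2 S2) (P1.length + C1.length + 2) = 0 := by
    rw [← heq]; exact zero_at_hi hP1 hC1
  have h1 := mid_pos (S := S2) hP2 hC2 (k := P1.length + C1.length + 2) (by omega) (by omega)
  omega

lemma split_unique {h : ℕ} (hh : 1 ≤ h) {P1 C1 S1 P2 C2 S2 : List ℤ}
    (hP1 : IsDyckPath P1) (hC1 : IsDyckPath C1) (hS1 : IsDyckPath S1)
    (hP2 : IsDyckPath P2) (hC2 : IsDyckPath C2) (hS2 : IsDyckPath S2)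
    (htC1 : pathHeight C1 = h - 1) (htS1 : pathHeight S1 ≤ h - 1)
    (htC2 : pathHeight C2 = h - 1) (htS2 : pathHeight S2 ≤ h - 1)
    (heq : asm P1 C1 S1 = asm P2 C2 S2) :
    P1 = P2 ∧ C1 = C2 ∧ S1 = S2 := by
  have hlp : P1.length = P2.length := by
    rcases lt_trichotomy P1.length P2.length with hc | hc | hc
    · exact (split_unique_aux hh hP1 hC1 hC2 htS1 htC2 hP2.2.2 heq hc).elim
    · exact hc
    · exact (split_unique_aux hh hP2 hC2 hC1 htS2 htC1 hP1.2.2 heq.symm hc).elim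
  have hlc : C1.length = C2.length := by
    rcases lt_trichotomy C1.length C2.length with hc | hc | hc
    · exact (split_unique_aux2 hP1.2.2 hC1.2.2 hP2.2.2 hC2 heq (by omega) (by omega)).elim
    · exact hc
    · exact (split_unique_aux2 hP2.2.2 hC2.2.2 hP1.2.2 hC1 heq.symm (by omega) (by omega)).elim
  exact components_eq heq hlp hlc

lemma split0_unique {C1 S1 C2 S2 : List ℤ} (hC1 : IsDyckPath C1) (hC2 : IsDyckPath C2)
    (heq : asm [] C1 S1 = asm [] C2 S2) : C1 = C2 ∧ S1 = S2 := by
  have hlc : C1.length = C2.length := by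
    rcases lt_trichotomy C1.length C2.length with hc | hc | hc
    · exact (split_unique_aux2 (by simp) hC1.2.2 (by simp) hC2 heq (by omega) (by simp; omega)).elim
    · exact hc
    · exact (split_unique_aux2 (by simp) hC2.2.2 (by simp) hC1 heq.symm (by omega) (by simp; omega)).elim
  have := components_eq heq rfl hlc
  exact ⟨this.2.1, this.2.2⟩


lemma surgery {π : List ℤ} (hπ : IsDyckPath π) {a b : ℕ} (hab : a < b) (hble : b ≤ π.length)
    (ha0 : psum π a = 0) (hb0 : psum π b = 0)
    (hmid : ∀ k, a < k → k < b → 1 ≤ psum π k) :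
    ∃ C, π = asm (π.take a) C (π.drop b) ∧ IsDyckPath (π.take a) ∧ IsDyckPath C ∧
      IsDyckPath (π.drop b) ∧ (∀ j, psum C j = psum π (min (a + 1 + j) (b - 1)) - 1) ∧
      (∀ k, psum (π.drop b) k = psum π (b + k)) := by
  have haln : a < π.length := lt_of_lt_of_le hab hble
  have hstepa : psum π (a + 1) = psum π a + π[a] := psum_step π a haln
  have hentrya : π[a] = 1 ∨ π[a] = -1 := hπ.1 _ (List.getElem_mem _)
  have hab2 : a + 1 < b := by
    by_contra hc
    have hb : b = a + 1 := by omega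
    rw [hb] at hb0
    omega
  have hpa1 : 1 ≤ psum π (a + 1) := hmid _ (by omega) hab2
  have hpa : π[a] = 1 := by omega
  have hpsa : psum π (a + 1) = 1 := by omega
  have hbln : b - 1 < π.length := by omega
  have hstepb : psum π (b - 1 + 1) = psum π (b - 1) + π[b - 1] := psum_step π (b - 1) hbln
  rw [show b - 1 + 1 = b by omega] at hstepb
  have hentryb : π[b - 1] = 1 ∨ π[b - 1] = -1 := hπ.1 _ (List.getElem_mem _)
  have hpb1 : 1 ≤ psum π (b - 1) := hmid _ (by omega) (by omega)
  have hpsb : psum π (b - 1) = 1 := by omega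
  set C := (π.take (b - 1)).drop (a + 1) with hCdef
  have hCsum : ∀ j, psum C j = psum π (min (a + 1 + j) (b - 1)) - 1 := by
    intro j
    rw [hCdef, psum_drop, psum_take, psum_take, min_eq_left (by omega : a + 1 ≤ b - 1), hpsa]
  have hClen : C.length = b - a - 2 := by
    rw [hCdef]
    simp [List.length_drop, List.length_take]
    omega
  have hdec : π = asm (π.take a) C (π.drop b) := by
    have hd3 : π.drop (a + 1) = C ++ π.drop (b - 1) := by
      have h5 := congrArg (List.drop (a + 1)) (List.take_append_drop (b - 1) π)
      rw [List.drop_append, List.length_take,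
        min_eq_left (by omega : b - 1 ≤ π.length),
        show a + 1 - (b - 1) = 0 by omega, List.drop_zero] at h5
      exact h5.symm
    have hd4 : π.drop (b - 1) = π[b - 1] :: π.drop b := by
      have := List.drop_eq_getElem_cons hbln
      rw [show b - 1 + 1 = b by omega] at this
      exact this
    conv_lhs => rw [← List.take_append_drop a π, List.drop_eq_getElem_cons haln, hpa,
      hd3, hd4]
    rw [hentryb.resolve_left (by omega)]
    simp [asm, arch]
  have hPd : IsDyckPath (π.take a) := by
    refine ⟨fun s hs => hπ.1 s (List.take_subset a π hs), ?_, ?_⟩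
    · intro k
      show (0:ℤ) ≤ psum (π.take a) k
      rw [psum_take]
      exact hπ.2.1 _
    · show psum π a = 0
      exact ha0
  have hSd : IsDyckPath (π.drop b) := by
    have hsum : ∀ k, psum (π.drop b) k = psum π (b + k) := by
      intro k
      rw [psum_drop, hb0, sub_zero]
    refine ⟨fun s hs => hπ.1 s (List.drop_subset b π hs), ?_, ?_⟩
    · intro k
      show (0:ℤ) ≤ psum (π.drop b) k
      rw [hsum]
      exact hπ.2.1 _
    · have h6 : (π.drop b).sum = psum (π.drop b) (π.drop b).length := by
        rw [psum_of_le le_rfl]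
      rw [h6, hsum, psum_of_le (by simp; omega), hπ.2.2]
  have hCd : IsDyckPath C := by
    refine ⟨?_, ?_, ?_⟩
    · intro s hs
      exact hπ.1 s (List.take_subset (b-1) π (List.drop_subset (a+1) _ hs))
    · intro k
      show (0:ℤ) ≤ psum C k
      rw [hCsum]
      have := hmid (min (a + 1 + k) (b - 1)) (by omega) (by omega)
      omega
    · have h6 : C.sum = psum C C.length := by rw [psum_of_le le_rfl]
      rw [h6, hCsum, hClen, show min (a + 1 + (b - a - 2)) (b-1) = b - 1 by omega, hpsb]
      ring
  exact ⟨C, hdec, hPd, hCd, hSd, hCsum, fun k => by rw [psum_drop, hb0, sub_zero]⟩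


lemma dyck_nil : IsDyckPath ([] : List ℤ) := by
  refine ⟨by simp, fun k => by simp [show ∀ k, (List.take k ([]:List ℤ)) = [] from fun k => by simp], by simp⟩

lemma exists_split {π : List ℤ} (hπ : IsDyckPath π) {h : ℕ} (hh : 1 ≤ h)
    (hht : pathHeight π = h) :
    ∃ P C S, IsDyckPath P ∧ IsDyckPath C ∧ IsDyckPath S ∧ π = asm P C S ∧
      pathHeight C = h - 1 ∧ pathHeight S ≤ h - 1 ∧ pathHeight P ≤ h := by
  have hmax : ∀ k, psum π k ≤ (h:ℤ) := fun k => by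
    have := le_height (p := π) k
    rw [hht] at this
    exact this
  obtain ⟨t0, ht0le, ht0⟩ := dyck_exists_height hπ
  set t := Nat.findGreatest (fun k => psum π k = (h:ℤ)) π.length with htdef
  have htP : psum π t = (h:ℤ) :=
    Nat.findGreatest_spec (P := fun k => psum π k = (h:ℤ)) ht0le (by show psum π t0 = (h:ℤ); rw [ht0, hht])
  have htle : t ≤ π.length := Nat.findGreatest_le _
  have htmax : ∀ k, t < k → psum π k ≠ (h:ℤ) := by
    intro k hk
    by_cases hkle : k ≤ π.length
    · exact Nat.findGreatest_is_greatest hk hkle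
    · rw [psum_of_le (by omega), hπ.2.2]
      intro hc
      omega
  have htgt : ∀ k, t < k → psum π k ≤ (h:ℤ) - 1 := fun k hk => by
    have h1 := hmax k
    have h2 := htmax k hk
    omega
  set a := Nat.findGreatest (fun k => psum π k = 0) t with hadef
  have haP : psum π a = 0 :=
    Nat.findGreatest_spec (P := fun k => psum π k = 0) (Nat.zero_le t) (psum_zero π)
  have hale : a ≤ t := Nat.findGreatest_le _
  have hane : a ≠ t := by
    intro hc
    rw [hc] at haP
    rw [haP] at htP
    omega
  have hamax : ∀ k, a < k → k ≤ t → psum π k ≠ 0 := fun k h1 h2 =>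
    Nat.findGreatest_is_greatest h1 h2
  have hex : ∃ m, psum π (t + m) = 0 := by
    refine ⟨π.length - t, ?_⟩
    rw [show t + (π.length - t) = π.length by omega, psum_of_le le_rfl, hπ.2.2]
  set b := t + Nat.find hex with hbdef
  have hbP : psum π b = 0 := Nat.find_spec hex
  have hbmin : ∀ k, t ≤ k → k < b → psum π k ≠ 0 := by
    intro k h1 h2
    have h3 := Nat.find_min hex (m := k - t) (by omega)
    rw [show t + (k - t) = k by omega] at h3
    exact h3
  have htb : t < b := by
    rcases eq_or_lt_of_le (Nat.le_add_right t (Nat.find hex) : t ≤ b) with hc | hc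
    · rw [← hbdef] at hc
      rw [← hc] at hbP
      rw [hbP] at htP
      omega
    · exact hc
  have hble : b ≤ π.length := by
    have : Nat.find hex ≤ π.length - t := Nat.find_le (by
      rw [show t + (π.length - t) = π.length by omega, psum_of_le le_rfl, hπ.2.2])
    omega
  have hmid : ∀ k, a < k → k < b → 1 ≤ psum π k := by
    intro k h1 h2
    have hnn : (0:ℤ) ≤ psum π k := hπ.2.1 k
    rcases le_or_gt k t with hc | hc
    · have := hamax k h1 hc
      show (1:ℤ) ≤ psum π k
      omega
    · have := hbmin k (le_of_lt hc) h2
      show (1:ℤ) ≤ psum π k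
      omega
  obtain ⟨C, hdec, hPd, hCd, hSd, hCsum, hSsum⟩ :=
    surgery hπ (by omega : a < b) hble haP hbP hmid
  refine ⟨π.take a, C, π.drop b, hPd, hCd, hSd, hdec, ?_, ?_, ?_⟩
  · apply le_antisymm
    · apply dyck_height_le hCd
      intro j
      rw [hCsum j]
      have := hmax (min (a + 1 + j) (b - 1))
      omega
    · apply dyck_le_height hCd (k := t - (a + 1))
      rw [hCsum, show min (a + 1 + (t - (a + 1))) (b - 1) = t by omega, htP]
      omega
  · apply dyck_height_le hSd
    intro k
    rw [hSsum k]
    have := htgt (b + k) (by omega)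
    omega
  · apply dyck_height_le hPd
    intro k
    show psum (π.take a) k ≤ (h:ℤ)
    rw [psum_take]
    exact hmax _

lemma exists_split0 {D : List ℤ} (hD : IsDyckPath D) (hne : 1 ≤ pathHeight D) :
    ∃ C S, IsDyckPath C ∧ IsDyckPath S ∧ D = asm [] C S := by
  have hpos : 0 < D.length := by
    rcases Nat.eq_zero_or_pos D.length with hc | hc
    · rw [List.length_eq_zero_iff] at hc
      rw [hc] at hne
      simp at hne
    · exact hc
  have hex : ∃ m, psum D (1 + m) = 0 := by
    refine ⟨D.length - 1, ?_⟩
    rw [show 1 + (D.length - 1) = D.length by omega, psum_of_le le_rfl, hD.2.2]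
  set b := 1 + Nat.find hex with hbdef
  have hbP : psum D b = 0 := Nat.find_spec hex
  have hble : b ≤ D.length := by
    have : Nat.find hex ≤ D.length - 1 := Nat.find_le (by
      rw [show 1 + (D.length - 1) = D.length by omega, psum_of_le le_rfl, hD.2.2])
    omega
  have hbmin : ∀ k, 1 ≤ k → k < b → psum D k ≠ 0 := by
    intro k h1 h2
    have h3 := Nat.find_min hex (m := k - 1) (by omega)
    rw [show 1 + (k - 1) = k by omega] at h3
    exact h3
  have hmid : ∀ k, 0 < k → k < b → 1 ≤ psum D k := by
    intro k h1 h2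
    have hnn : (0:ℤ) ≤ psum D k := hD.2.1 k
    have := hbmin k (by omega) h2
    show (1:ℤ) ≤ psum D k
    omega
  obtain ⟨C, hdec, hPd, hCd, hSd, hCsum, hSsum⟩ :=
    surgery hD (by omega : 0 < b) hble (psum_zero D) hbP hmid
  rw [List.take_zero] at hdec
  exact ⟨C, D.drop b, hCd, hSd, hdec⟩


def Lt (n : ℤ) (a : ℕ) : Type :=
  {p : List ℤ // IsDyckPath p ∧ ((p.length : ℤ) = 2 * n) ∧ pathHeight p = a}

def Pr (n : ℤ) (a b : ℕ) : Type :=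
  {q : List ℤ × List ℤ // IsDyckPath q.1 ∧ IsDyckPath q.2 ∧
    ((q.1.length : ℤ) + (q.2.length : ℤ) = 2 * n) ∧ pathHeight q.1 = a ∧ pathHeight q.2 = b}

def Bt (n : ℤ) (h : ℕ) : Type :=
  {q : List ℤ × List ℤ // IsDyckPath q.1 ∧ IsDyckPath q.2 ∧
    ((q.1.length : ℤ) + (q.2.length : ℤ) = 2 * n) ∧
    (1 ≤ pathHeight q.1 ∧ pathHeight q.1 ≤ h) ∧ pathHeight q.2 = h - 1}

def Tt (n : ℤ) (h : ℕ) : Type :=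
  {r : List ℤ × List ℤ × List ℤ // IsDyckPath r.1 ∧ IsDyckPath r.2.1 ∧ IsDyckPath r.2.2 ∧
    ((r.1.length : ℤ) + (r.2.1.length : ℤ) + (r.2.2.length : ℤ) + 2 = 2 * n) ∧
    pathHeight r.2.1 = h - 1 ∧ pathHeight r.2.2 ≤ h - 1 ∧ pathHeight r.1 ≤ h}

lemma finite_aux (N : ℕ) :
    {p : List ℤ | (∀ s ∈ p, s = 1 ∨ s = -1) ∧ p.length ≤ N}.Finite := by
  have h1 : {l : List Bool | l.length ≤ N}.Finite := List.finite_length_le Bool N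
  apply Set.Finite.subset (h1.image (fun l => l.map (fun b => if b then (1:ℤ) else -1)))
  intro p hp
  refine ⟨p.map (fun x => decide (x = 1)), by simpa using hp.2, ?_⟩
  simp only [List.map_map]
  conv_rhs => rw [← List.map_id p]
  apply List.map_congr_left
  intro a ha
  rcases hp.1 a ha with h | h <;> simp [h]

lemma finite_pair_subtype (n : ℤ) (Q : List ℤ × List ℤ → Prop)
    (hQ : ∀ q, Q q → IsDyckPath q.1 ∧ IsDyckPath q.2 ∧
      ((q.1.length : ℤ) + (q.2.length : ℤ) = 2 * n)) :
    Finite {q : List ℤ × List ℤ // Q q} := by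
  set N := (2 * n).toNat with hN
  have hfin := (finite_aux N).prod (finite_aux N)
  have hsub : {q : List ℤ × List ℤ | Q q} ⊆
      {p : List ℤ | (∀ s ∈ p, s = 1 ∨ s = -1) ∧ p.length ≤ N} ×ˢ
      {p : List ℤ | (∀ s ∈ p, s = 1 ∨ s = -1) ∧ p.length ≤ N} := by
    intro q hq
    obtain ⟨h1, h2, h3⟩ := hQ q hq
    refine ⟨⟨h1.1, ?_⟩, ⟨h2.1, ?_⟩⟩ <;> omega
  exact (hfin.subset hsub).to_subtype

instance finite_Pr (n : ℤ) (a b : ℕ) : Finite (Pr n a b) :=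
  finite_pair_subtype n _ (fun q hq => ⟨hq.1, hq.2.1, hq.2.2.1⟩)

instance finite_Bt (n : ℤ) (h : ℕ) : Finite (Bt n h) :=
  finite_pair_subtype n _ (fun q hq => ⟨hq.1, hq.2.1, hq.2.2.1⟩)

lemma card_Lt_eq_card_Tt (n : ℤ) {h : ℕ} (hh : 1 ≤ h) :
    Nat.card (Lt n h) = Nat.card (Tt n h) := by
  apply Nat.card_congr
  apply Equiv.symm
  apply Equiv.ofBijective (f := fun r : Tt n h =>
    (⟨asm r.1.1 r.1.2.1 r.1.2.2, dyck_asm r.2.1 r.2.2.1 r.2.2.2.1, by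
      have := len_asm r.1.1 r.1.2.1 r.1.2.2
      have h4 := r.2.2.2.2.1
      zify at this
      push_cast
      rw [this]
      push_cast
      omega, by
      rw [height_asm r.2.1 r.2.2.1 r.2.2.2.1]
      have h1 := r.2.2.2.2.2.1
      have h2 := r.2.2.2.2.2.2.1
      have h3 := r.2.2.2.2.2.2.2
      omega⟩ : Lt n h))
  constructor
  · rintro ⟨⟨P1, C1, S1⟩, d1⟩ ⟨⟨P2, C2, S2⟩, d2⟩ heq
    have heq2 : asm P1 C1 S1 = asm P2 C2 S2 := congrArg Subtype.val heq
    obtain ⟨e1, e2, e3⟩ := split_unique hh d1.1 d1.2.1 d1.2.2.1 d2.1 d2.2.1 d2.2.2.1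
      d1.2.2.2.2.1 d1.2.2.2.2.2.1 d2.2.2.2.2.1 d2.2.2.2.2.2.1 heq2
    apply Subtype.ext
    simp only [Prod.mk.injEq]
    exact ⟨e1, e2, e3⟩
  · rintro ⟨π, hπ, hlen, hht⟩
    obtain ⟨P, C, S, hPd, hCd, hSd, hdec, h1, h2, h3⟩ := exists_split hπ hh hht
    refine ⟨⟨(P, C, S), hPd, hCd, hSd, ?_, h1, h2, h3⟩, ?_⟩
    · have := len_asm P C S
      rw [← hdec] at this
      push_cast [← hlen, this]
      push_cast
      omega
    · apply Subtype.ext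
      exact hdec.symm

lemma card_Bt_eq_card_Tt (n : ℤ) {h : ℕ} (hh : 1 ≤ h) :
    Nat.card (Bt n h) = Nat.card (Tt n h) := by
  apply Nat.card_congr
  apply Equiv.symm
  apply Equiv.ofBijective (f := fun r : Tt n h =>
    (⟨(asm [] r.1.2.2 r.1.1, r.1.2.1), dyck_asm dyck_nil r.2.2.2.1 r.2.1, r.2.2.1, by
      have := len_asm [] r.1.2.2 r.1.1
      have h4 := r.2.2.2.2.1
      simp only [List.length_nil, zero_add] at this
      push_cast [this]
      push_cast
      omega, by
      constructor
      · rw [height_asm dyck_nil r.2.2.2.1 r.2.1, height_nil]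
        omega
      · rw [height_asm dyck_nil r.2.2.2.1 r.2.1, height_nil]
        have h1 := r.2.2.2.2.2.2.1
        have h2 := r.2.2.2.2.2.2.2
        omega, r.2.2.2.2.2.1⟩ : Bt n h))
  constructor
  · rintro ⟨⟨P1, C1, S1⟩, d1⟩ ⟨⟨P2, C2, S2⟩, d2⟩ heq
    have heq2 : (asm [] S1 P1, C1) = (asm [] S2 P2, C2) := congrArg Subtype.val heq
    rw [Prod.mk.injEq] at heq2
    obtain ⟨e1, e2⟩ := split0_unique d1.2.2.1 d2.2.2.1 heq2.1
    apply Subtype.ext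
    simp only [Prod.mk.injEq]
    exact ⟨e2, heq2.2, e1⟩
  · rintro ⟨⟨D, C⟩, hDd, hCd, hlen, ⟨hD1, hDh⟩, hCh⟩
    dsimp only at hDd hCd hlen hCh hD1 hDh
    obtain ⟨X, Y, hXd, hYd, hdec⟩ := exists_split0 hDd hD1
    have hht : pathHeight D = max (pathHeight X + 1) (pathHeight Y) := by
      rw [hdec, height_asm dyck_nil hXd hYd, height_nil]
      omega
    refine ⟨⟨(Y, C, X), hYd, hCd, hXd, ?_, hCh, ?_, ?_⟩, ?_⟩
    · dsimp only
      have := len_asm [] X Y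
      rw [← hdec] at this
      simp only [List.length_nil, zero_add] at this
      push_cast [← hlen, this]
      push_cast
      omega
    · dsimp only
      omega
    · dsimp only
      omega
    · apply Subtype.ext
      simp only [Prod.mk.injEq]
      exact ⟨hdec.symm, trivial⟩


lemma mycard_sigma {ι : Type*} [Fintype ι] (f : ι → Type*) [∀ i, Finite (f i)] :
    Nat.card (Σ i, f i) = ∑ i, Nat.card (f i) := by
  letI := fun i => Fintype.ofFinite (f i)
  simp [Nat.card_eq_fintype_card]

lemma card_Bt_eq_sum (n : ℤ) (h : ℕ) :
    Nat.card (Bt n h) = ∑ y ∈ Finset.Icc 1 h, Nat.card (Pr n y (h - 1)) := by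
  have e1 : Bt n h ≃ Σ y : (Finset.Icc 1 h), Pr n (y : ℕ) (h - 1) := by
    refine ⟨fun q => ⟨⟨pathHeight q.1.1, Finset.mem_Icc.2 ⟨q.2.2.2.2.1.1, q.2.2.2.2.1.2⟩⟩,
      ⟨q.1, q.2.1, q.2.2.1, q.2.2.2.1, rfl, q.2.2.2.2.2⟩⟩,
      fun s => ⟨s.2.1, s.2.2.1, s.2.2.2.1, s.2.2.2.2.1, ?_, s.2.2.2.2.2.2⟩, ?_, ?_⟩
    · have hy := Finset.mem_Icc.1 s.1.2
      have := s.2.2.2.2.2.1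
      omega
    · intro q
      rfl
    · rintro ⟨⟨y, hy⟩, ⟨q, hq⟩⟩
      have hval : pathHeight q.1 = y := hq.2.2.2.1
      apply Sigma.subtype_ext
      · apply Subtype.ext
        exact hval
      · rfl
  rw [Nat.card_congr e1, mycard_sigma, Finset.sum_coe_sort (Finset.Icc 1 h)
    (fun y => Nat.card (Pr n y (h - 1)))]

lemma P_one (n : ℤ) (a : ℕ) : P n [a] = Nat.card (Lt n a) := by
  apply Nat.card_congr
  show {p : Fin 1 → List ℤ // (∀ i, IsDyckPath (p i)) ∧
    (∑ i, ((p i).length : ℤ)) = 2 * n ∧ ∀ i, pathHeight (p i) = [a].get i} ≃ Lt n a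
  refine ⟨fun f => ⟨f.1 0, f.2.1 0, ?_, ?_⟩, fun p => ⟨fun _ => p.1, fun _ => p.2.1, ?_, ?_⟩,
    ?_, ?_⟩
  · have := f.2.2.1
    rwa [Fin.sum_univ_one] at this
  · exact f.2.2.2 0
  · rw [Fin.sum_univ_one]
    exact p.2.2.1
  · intro i
    have : i = 0 := Subsingleton.elim i 0
    rw [this]
    exact p.2.2.2
  · intro f
    apply Subtype.ext
    funext i
    have : i = 0 := Subsingleton.elim i 0
    rw [this]
  · intro p
    rfl

lemma P_two (n : ℤ) (a b : ℕ) : P n [a, b] = Nat.card (Pr n a b) := by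
  apply Nat.card_congr
  show {p : Fin 2 → List ℤ // (∀ i, IsDyckPath (p i)) ∧
    (∑ i, ((p i).length : ℤ)) = 2 * n ∧ ∀ i, pathHeight (p i) = [a, b].get i} ≃ Pr n a b
  refine ⟨fun f => ⟨(f.1 0, f.1 1), f.2.1 0, f.2.1 1, ?_, f.2.2.2 0, f.2.2.2 1⟩,
    fun q => ⟨![q.1.1, q.1.2], ?_, ?_, ?_⟩, ?_, ?_⟩
  · have := f.2.2.1
    rwa [Fin.sum_univ_two] at this
  · intro i
    fin_cases i
    · exact q.2.1
    · exact q.2.2.1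
  · rw [Fin.sum_univ_two]
    simpa using q.2.2.2.1
  · intro i
    fin_cases i
    · exact q.2.2.2.2.1
    · exact q.2.2.2.2.2
  · intro f
    apply Subtype.ext
    funext i
    fin_cases i <;> rfl
  · intro q
    apply Subtype.ext
    rfl

end SPS

/-- For `n ≥ 0` and `h ≥ 1`, the number of Dyck paths of length `2n` and height `h`
satisfies `P_n(h) = ∑_{y=1}^{h} P_n(y, h−1)`. -/


theorem single_path_splitter (n : ℕ) (h : ℕ) (hh : 1 ≤ h) :
    P (n : ℤ) [h] = ∑ y ∈ Finset.Icc 1 h, P (n : ℤ) [y, h - 1] := by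
  rw [SPS.P_one, SPS.card_Lt_eq_card_Tt _ hh, ← SPS.card_Bt_eq_card_Tt _ hh,
    SPS.card_Bt_eq_sum]
  apply Finset.sum_congr rfl
  intro y _
  rw [SPS.P_two]
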